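/- Fix x ∈ X and suppose f(y) > 0 and π(y) > 0 for all y ∈ Y, where Y is a nonempty finite set, f : Y → ℝ are the class-conditional density values at x, and π : Y → ℝ are the class-priors. If the logits Φ : Y → ℝ satisfy, for every y ∈ Y, exp(Φ(y) + log π(y)) / Σ_{y' ∈ Y} exp(Φ(y') + log π(y')) = π(y)·f(y) / Σ_{y' ∈ Y} π(y')·f(y') (i.e., the logit-adjusted softmax matches the posterior), then there exists c > 0 such that exp(Φ(y)) = c · f(y) for every y ∈ Y; in particular, {y : Φ(y) = max_{y'} Φ(y')} = {y : f(y) = max_{y'} f(y')}, so the learned logits recover the class-conditionals up to a constant factor. -/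
import Mathlib


/-- If the logit-adjusted softmax matches the posterior `π(y)·f(y) / Σ π(y')·f(y')`,
then the exponentiated logits recover the class-conditionals up to a positive
constant factor; in particular the logit maximizers coincide with the
class-conditional maximizers. -/
theorem stmt11 {Y : Type*} [Fintype Y] [Nonempty Y]
    (Φ π f : Y → ℝ) (hπ : ∀ y, 0 < π y) (hf : ∀ y, 0 < f y)
    (hmatch : ∀ y, Real.exp (Φ y + Real.log (π y)) /
        (∑ y', Real.exp (Φ y' + Real.log (π y'))) =
      π y * f y / ∑ y', π y' * f y') :
    (∃ c : ℝ, 0 < c ∧ ∀ y, Real.exp (Φ y) = c * f y) ∧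
      {y : Y | Φ y = ⨆ y', Φ y'} = {y : Y | f y = ⨆ y', f y'} := by
  set S : ℝ := ∑ y', Real.exp (Φ y' + Real.log (π y')) with hSdef
  set T : ℝ := ∑ y', π y' * f y' with hTdef
  have hS : 0 < S := Finset.sum_pos (fun y _ => Real.exp_pos _) Finset.univ_nonempty
  have hT : 0 < T := Finset.sum_pos (fun y _ => mul_pos (hπ y) (hf y)) Finset.univ_nonempty
  have hc : 0 < S / T := div_pos hS hT
  have hexp : ∀ y, Real.exp (Φ y) = (S / T) * f y := by
    intro y
    have h := hmatch y
    rw [div_eq_div_iff hS.ne' hT.ne'] at h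
    rw [Real.exp_add, Real.exp_log (hπ y)] at h
    have h3 := mul_left_cancel₀ (hπ y).ne'
      (show π y * (Real.exp (Φ y) * T) = π y * (S * f y) by linear_combination h)
    rw [div_mul_eq_mul_div, eq_div_iff hT.ne']
    linear_combination h3
  have hmax := Finite.exists_max f
  obtain ⟨y0, hy0⟩ := hmax
  have hΦle : ∀ y, Φ y ≤ Φ y0 := by
    intro y
    have : Real.exp (Φ y) ≤ Real.exp (Φ y0) := by
      rw [hexp y, hexp y0]
      exact mul_le_mul_of_nonneg_left (hy0 y) hc.le
    exact Real.exp_le_exp.mp this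
  have hsupΦ : (⨆ y', Φ y') = Φ y0 :=
    le_antisymm (ciSup_le hΦle) (le_ciSup (Finite.bddAbove_range _) y0)
  have hsupf : (⨆ y', f y') = f y0 :=
    le_antisymm (ciSup_le hy0) (le_ciSup (Finite.bddAbove_range _) y0)
  refine ⟨⟨S / T, hc, hexp⟩, ?_⟩
  ext y
  simp only [Set.mem_setOf_eq, hsupΦ, hsupf]
  constructor
  · intro h
    have := congrArg Real.exp h
    rw [hexp y, hexp y0] at this
    exact mul_left_cancel₀ hc.ne' this
  · intro h
    have : Real.exp (Φ y) = Real.exp (Φ y0) := by rw [hexp y, hexp y0, h]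
    exact Real.exp_injective this
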